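/- Every 4×8 matrix Λ over ℤ/2 that is a (ℤ/2)-characteristic matrix over P₀⁴(8) is equivalent over P₀⁴(8) to one of the three matrices a₁, a₂, a₇. -/

import Mathlib

open Matrix

def V0 : List (Fin 4 → Fin 8) :=
  [![0,1,2,3], ![0,1,2,7], ![0,1,3,4], ![0,1,4,5], ![0,1,5,6], ![0,1,6,7], ![0,2,3,4], ![0,2,4,5], ![0,2,5,6], ![0,2,6,7], ![1,2,3,7], ![1,3,4,6], ![1,3,6,7], ![1,4,5,6], ![2,3,4,7], ![2,4,5,7], ![2,5,6,7], ![3,4,5,6], ![3,4,5,7], ![3,5,6,7]]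
def V0F : Finset (Finset (Fin 8)) :=
  {{0,1,2,3}, {0,1,2,7}, {0,1,3,4}, {0,1,4,5}, {0,1,5,6}, {0,1,6,7}, {0,2,3,4}, {0,2,4,5}, {0,2,5,6}, {0,2,6,7}, {1,2,3,7}, {1,3,4,6}, {1,3,6,7}, {1,4,5,6}, {2,3,4,7}, {2,4,5,7}, {2,5,6,7}, {3,4,5,6}, {3,4,5,7}, {3,5,6,7}}
def a1 : Matrix (Fin 4) (Fin 8) (ZMod 2) :=
  !![1, 0, 0, 0, 1, 0, 0, 1;
    0, 1, 0, 0, 1, 0, 1, 0;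
    0, 0, 1, 0, 1, 1, 1, 0;
    0, 0, 0, 1, 0, 1, 0, 1]
def a2 : Matrix (Fin 4) (Fin 8) (ZMod 2) :=
  !![1, 0, 0, 0, 1, 0, 0, 1;
    0, 1, 0, 0, 1, 0, 1, 0;
    0, 0, 1, 0, 1, 1, 1, 1;
    0, 0, 0, 1, 0, 1, 0, 1]
def a3 : Matrix (Fin 4) (Fin 8) (ZMod 2) :=
  !![1, 0, 0, 0, 0, 0, 1, 1;
    0, 1, 0, 0, 1, 0, 1, 0;
    0, 0, 1, 0, 1, 1, 1, 0;
    0, 0, 0, 1, 0, 1, 0, 1]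
def a4 : Matrix (Fin 4) (Fin 8) (ZMod 2) :=
  !![1, 0, 0, 0, 0, 0, 1, 1;
    0, 1, 0, 0, 1, 0, 1, 0;
    0, 0, 1, 0, 1, 1, 0, 1;
    0, 0, 0, 1, 0, 1, 1, 1]
def a5 : Matrix (Fin 4) (Fin 8) (ZMod 2) :=
  !![1, 0, 0, 0, 0, 0, 1, 1;
    0, 1, 0, 0, 1, 1, 0, 1;
    0, 0, 1, 0, 1, 0, 1, 0;
    0, 0, 0, 1, 0, 1, 1, 1]
def a6 : Matrix (Fin 4) (Fin 8) (ZMod 2) :=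
  !![1, 0, 0, 0, 0, 0, 1, 1;
    0, 1, 0, 0, 1, 1, 1, 1;
    0, 0, 1, 0, 1, 0, 1, 0;
    0, 0, 0, 1, 0, 1, 0, 1]
def a7 : Matrix (Fin 4) (Fin 8) (ZMod 2) :=
  !![1, 0, 0, 0, 0, 1, 1, 1;
    0, 1, 0, 0, 1, 1, 0, 1;
    0, 0, 1, 0, 1, 1, 1, 0;
    0, 0, 0, 1, 1, 0, 1, 1]

/-- The 8×8 permutation matrix of σ over ℤ/2: P_σ e_j = e_(σ j). -/
def permMat (σ : Equiv.Perm (Fin 8)) : Matrix (Fin 8) (Fin 8) (ZMod 2) :=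
  Matrix.of fun i j => if i = σ j then 1 else 0

/-- σ is a combinatorial automorphism of the polytope. -/
def IsAut (σ : Equiv.Perm (Fin 8)) : Prop :=
  V0F.image (fun v => v.image (fun x => σ x)) = V0F

/-- Equivalence of characteristic matrices over the polytope. -/
def MatEquiv (Λ Λ' : Matrix (Fin 4) (Fin 8) (ZMod 2)) : Prop :=
  ∃ (g : Matrix (Fin 4) (Fin 4) (ZMod 2)) (σ : Equiv.Perm (Fin 8)),
    IsUnit g ∧ IsAut σ ∧ Λ' = g * Λ * permMat σ


set_option maxRecDepth 100000
set_option synthInstance.maxSize 100000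
set_option synthInstance.maxHeartbeats 4000000
set_option maxHeartbeats 10000000

def det4 (m : Matrix (Fin 4) (Fin 4) (ZMod 2)) : ZMod 2 :=
  m 0 0 * (m 1 1 * (m 2 2 * m 3 3 + m 2 3 * m 3 2) + m 1 2 * (m 2 1 * m 3 3 + m 2 3 * m 3 1) + m 1 3 * (m 2 1 * m 3 2 + m 2 2 * m 3 1)) +
  m 0 1 * (m 1 0 * (m 2 2 * m 3 3 + m 2 3 * m 3 2) + m 1 2 * (m 2 0 * m 3 3 + m 2 3 * m 3 0) + m 1 3 * (m 2 0 * m 3 2 + m 2 2 * m 3 0)) +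
  m 0 2 * (m 1 0 * (m 2 1 * m 3 3 + m 2 3 * m 3 1) + m 1 1 * (m 2 0 * m 3 3 + m 2 3 * m 3 0) + m 1 3 * (m 2 0 * m 3 1 + m 2 1 * m 3 0)) +
  m 0 3 * (m 1 0 * (m 2 1 * m 3 2 + m 2 2 * m 3 1) + m 1 1 * (m 2 0 * m 3 2 + m 2 2 * m 3 0) + m 1 2 * (m 2 0 * m 3 1 + m 2 1 * m 3 0))

theorem det4_eq (m : Matrix (Fin 4) (Fin 4) (ZMod 2)) : m.det = det4 m := by
  simp [Matrix.det_succ_row_zero, Fin.sum_univ_succ, det4, CharTwo.neg_eq]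
  simp only [show Fin.succ (2:Fin 3) = 3 from rfl, show Fin.succAbove (2:Fin 4) (2:Fin 3) = 3 from rfl,
    show Fin.succAbove (1:Fin 4) (2:Fin 3) = 3 from rfl, show Fin.castSucc (2:Fin 3) = 2 from rfl, show Fin.succAbove (3:Fin 4) (2:Fin 3) = 2 from rfl]
  ring

def mk (c4 c5 c6 c7 : Fin 4 → ZMod 2) : Matrix (Fin 4) (Fin 8) (ZMod 2) :=
  Matrix.of fun i j =>
    if j = 0 then (if i = 0 then 1 else 0) else if j = 1 then (if i = 1 then 1 else 0)
    else if j = 2 then (if i = 2 then 1 else 0) else if j = 3 then (if i = 3 then 1 else 0)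
    else if j = 4 then c4 i else if j = 5 then c5 i else if j = 6 then c6 i else c7 i

theorem mul_submatrix (L : Matrix (Fin 4) (Fin 4) (ZMod 2)) (Λ : Matrix (Fin 4) (Fin 8) (ZMod 2))
    (v : Fin 4 → Fin 8) : (L * Λ).submatrix id v = L * (Λ.submatrix id v) := by
  ext i j
  simp [Matrix.mul_apply, Matrix.submatrix_apply]

theorem mk_of_id (N : Matrix (Fin 4) (Fin 8) (ZMod 2))
    (hid : N.submatrix id ![0,1,2,3] = 1) :
    N = mk (fun i => N i 4) (fun i => N i 5) (fun i => N i 6) (fun i => N i 7) := by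
  have h01 : ∀ (i : Fin 4) (j' : Fin 4), N i (![0,1,2,3] j') = (1 : Matrix (Fin 4) (Fin 4) (ZMod 2)) i j' :=
    fun i j' => congrFun (congrFun hid i) j'
  ext i j
  fin_cases j
  · simpa [mk, Matrix.one_apply] using h01 i 0
  · simpa [mk, Matrix.one_apply] using h01 i 1
  · simpa [mk, Matrix.one_apply] using h01 i 2
  · simpa [mk, Matrix.one_apply] using h01 i 3
  · simp [mk]
  · simp [mk]
  · simp [mk]
  · simp [mk]

theorem bridge1 (c4 c5 c6 c7 : Fin 4 → ZMod 2) :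
    det4 ((mk c4 c5 c6 c7).submatrix id ![0,1,2,7]) = c7 3 := by
  first
  | (simp [det4, mk, Matrix.submatrix_apply]; ring)
  | simp [det4, mk, Matrix.submatrix_apply]
theorem bridge2 (c4 c5 c6 c7 : Fin 4 → ZMod 2) :
    det4 ((mk c4 c5 c6 c7).submatrix id ![0,1,3,4]) = c4 2 := by
  first
  | (simp [det4, mk, Matrix.submatrix_apply]; ring)
  | simp [det4, mk, Matrix.submatrix_apply]
theorem bridge3 (c4 c5 c6 c7 : Fin 4 → ZMod 2) :
    det4 ((mk c4 c5 c6 c7).submatrix id ![0,2,3,4]) = c4 1 := by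
  first
  | (simp [det4, mk, Matrix.submatrix_apply]; ring)
  | simp [det4, mk, Matrix.submatrix_apply]
theorem bridge4 (c4 c5 c6 c7 : Fin 4 → ZMod 2) :
    det4 ((mk c4 c5 c6 c7).submatrix id ![1,2,3,7]) = c7 0 := by
  first
  | (simp [det4, mk, Matrix.submatrix_apply]; ring)
  | simp [det4, mk, Matrix.submatrix_apply]
theorem bridge5 (c4 c5 c6 c7 : Fin 4 → ZMod 2) :
    det4 ((mk c4 c5 c6 c7).submatrix id ![0,1,4,5]) = c4 2 * c5 3 + c4 3 * c5 2 := by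
  first
  | (simp [det4, mk, Matrix.submatrix_apply]; ring)
  | simp [det4, mk, Matrix.submatrix_apply]
theorem bridge6 (c4 c5 c6 c7 : Fin 4 → ZMod 2) :
    det4 ((mk c4 c5 c6 c7).submatrix id ![0,1,5,6]) = c5 2 * c6 3 + c5 3 * c6 2 := by
  first
  | (simp [det4, mk, Matrix.submatrix_apply]; ring)
  | simp [det4, mk, Matrix.submatrix_apply]
theorem bridge7 (c4 c5 c6 c7 : Fin 4 → ZMod 2) :
    det4 ((mk c4 c5 c6 c7).submatrix id ![0,1,6,7]) = c6 2 * c7 3 + c6 3 * c7 2 := by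
  first
  | (simp [det4, mk, Matrix.submatrix_apply]; ring)
  | simp [det4, mk, Matrix.submatrix_apply]
theorem bridge8 (c4 c5 c6 c7 : Fin 4 → ZMod 2) :
    det4 ((mk c4 c5 c6 c7).submatrix id ![0,2,4,5]) = c4 1 * c5 3 + c4 3 * c5 1 := by
  first
  | (simp [det4, mk, Matrix.submatrix_apply]; ring)
  | simp [det4, mk, Matrix.submatrix_apply]
theorem bridge9 (c4 c5 c6 c7 : Fin 4 → ZMod 2) :
    det4 ((mk c4 c5 c6 c7).submatrix id ![0,2,5,6]) = c5 1 * c6 3 + c5 3 * c6 1 := by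
  first
  | (simp [det4, mk, Matrix.submatrix_apply]; ring)
  | simp [det4, mk, Matrix.submatrix_apply]
theorem bridge10 (c4 c5 c6 c7 : Fin 4 → ZMod 2) :
    det4 ((mk c4 c5 c6 c7).submatrix id ![0,2,6,7]) = c6 1 * c7 3 + c6 3 * c7 1 := by
  first
  | (simp [det4, mk, Matrix.submatrix_apply]; ring)
  | simp [det4, mk, Matrix.submatrix_apply]
theorem bridge11 (c4 c5 c6 c7 : Fin 4 → ZMod 2) :
    det4 ((mk c4 c5 c6 c7).submatrix id ![1,3,4,6]) = c4 0 * c6 2 + c4 2 * c6 0 := by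
  first
  | (simp [det4, mk, Matrix.submatrix_apply]; ring)
  | simp [det4, mk, Matrix.submatrix_apply]
theorem bridge12 (c4 c5 c6 c7 : Fin 4 → ZMod 2) :
    det4 ((mk c4 c5 c6 c7).submatrix id ![1,3,6,7]) = c6 0 * c7 2 + c6 2 * c7 0 := by
  first
  | (simp [det4, mk, Matrix.submatrix_apply]; ring)
  | simp [det4, mk, Matrix.submatrix_apply]
theorem bridge13 (c4 c5 c6 c7 : Fin 4 → ZMod 2) :
    det4 ((mk c4 c5 c6 c7).submatrix id ![2,3,4,7]) = c4 0 * c7 1 + c4 1 * c7 0 := by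
  first
  | (simp [det4, mk, Matrix.submatrix_apply]; ring)
  | simp [det4, mk, Matrix.submatrix_apply]
theorem bridge14 (c4 c5 c6 c7 : Fin 4 → ZMod 2) :
    det4 ((mk c4 c5 c6 c7).submatrix id ![1,4,5,6]) = c4 0 * c5 2 * c6 3 + c4 0 * c5 3 * c6 2 + c4 2 * c5 0 * c6 3 + c4 3 * c5 0 * c6 2 + c4 2 * c5 3 * c6 0 + c4 3 * c5 2 * c6 0 := by
  first
  | (simp [det4, mk, Matrix.submatrix_apply]; ring)
  | simp [det4, mk, Matrix.submatrix_apply]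
theorem bridge15 (c4 c5 c6 c7 : Fin 4 → ZMod 2) :
    det4 ((mk c4 c5 c6 c7).submatrix id ![2,4,5,7]) = c4 0 * c5 1 * c7 3 + c4 0 * c5 3 * c7 1 + c4 1 * c5 0 * c7 3 + c4 3 * c5 0 * c7 1 + c4 1 * c5 3 * c7 0 + c4 3 * c5 1 * c7 0 := by
  first
  | (simp [det4, mk, Matrix.submatrix_apply]; ring)
  | simp [det4, mk, Matrix.submatrix_apply]
theorem bridge16 (c4 c5 c6 c7 : Fin 4 → ZMod 2) :
    det4 ((mk c4 c5 c6 c7).submatrix id ![2,5,6,7]) = c5 0 * c6 1 * c7 3 + c5 0 * c6 3 * c7 1 + c5 1 * c6 0 * c7 3 + c5 3 * c6 0 * c7 1 + c5 1 * c6 3 * c7 0 + c5 3 * c6 1 * c7 0 := by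
  first
  | (simp [det4, mk, Matrix.submatrix_apply]; ring)
  | simp [det4, mk, Matrix.submatrix_apply]
theorem bridge17 (c4 c5 c6 c7 : Fin 4 → ZMod 2) :
    det4 ((mk c4 c5 c6 c7).submatrix id ![3,4,5,6]) = c4 0 * c5 1 * c6 2 + c4 0 * c5 2 * c6 1 + c4 1 * c5 0 * c6 2 + c4 2 * c5 0 * c6 1 + c4 1 * c5 2 * c6 0 + c4 2 * c5 1 * c6 0 := by
  first
  | (simp [det4, mk, Matrix.submatrix_apply]; ring)
  | simp [det4, mk, Matrix.submatrix_apply]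
theorem bridge18 (c4 c5 c6 c7 : Fin 4 → ZMod 2) :
    det4 ((mk c4 c5 c6 c7).submatrix id ![3,4,5,7]) = c4 0 * c5 1 * c7 2 + c4 0 * c5 2 * c7 1 + c4 1 * c5 0 * c7 2 + c4 2 * c5 0 * c7 1 + c4 1 * c5 2 * c7 0 + c4 2 * c5 1 * c7 0 := by
  first
  | (simp [det4, mk, Matrix.submatrix_apply]; ring)
  | simp [det4, mk, Matrix.submatrix_apply]
theorem bridge19 (c4 c5 c6 c7 : Fin 4 → ZMod 2) :
    det4 ((mk c4 c5 c6 c7).submatrix id ![3,5,6,7]) = c5 0 * c6 1 * c7 2 + c5 0 * c6 2 * c7 1 + c5 1 * c6 0 * c7 2 + c5 2 * c6 0 * c7 1 + c5 1 * c6 2 * c7 0 + c5 2 * c6 1 * c7 0 := by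
  first
  | (simp [det4, mk, Matrix.submatrix_apply]; ring)
  | simp [det4, mk, Matrix.submatrix_apply]

def allZ2 (g : ZMod 2 → Bool) : Bool := g 0 && g 1
theorem allZ2_spec {g : ZMod 2 → Bool} (h : allZ2 g = true) : ∀ x : ZMod 2, g x = true := by
  have h01 : ∀ x : ZMod 2, x = 0 ∨ x = 1 := by decide
  intro x
  rcases h01 x with rfl | rfl
  · exact (Bool.and_eq_true_iff.mp h).1
  · exact (Bool.and_eq_true_iff.mp h).2
theorem unguard {p : Prop} [Decidable p] {b : Bool} (hp : p) (h : (!decide p || b) = true) :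
    b = true := by
  have hd : decide p = true := decide_eq_true hp
  simpa [hd] using h
def good : Bool :=
  allZ2 (fun x41 =>
  (!decide (x41 = 1) || allZ2 (fun x42 =>
  (!decide (x42 = 1) || allZ2 (fun x70 =>
  (!decide (x70 = 1) || allZ2 (fun x73 =>
  (!decide (x73 = 1) || allZ2 (fun x43 =>
  allZ2 (fun x51 =>
  allZ2 (fun x52 =>
  allZ2 (fun x53 =>
  (!decide (x42 * x53 + x43 * x52 = 1) || (!decide (x41 * x53 + x43 * x51 = 1) || allZ2 (fun x61 =>
  allZ2 (fun x62 =>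
  allZ2 (fun x63 =>
  (!decide (x52 * x63 + x53 * x62 = 1) || (!decide (x51 * x63 + x53 * x61 = 1) || allZ2 (fun x71 =>
  (!decide (x61 * x73 + x63 * x71 = 1) || allZ2 (fun x72 =>
  (!decide (x62 * x73 + x63 * x72 = 1) || allZ2 (fun x40 =>
  (!decide (x40 * x71 + x41 * x70 = 1) || allZ2 (fun x50 =>
  (!decide (x40 * x51 * x73 + x40 * x53 * x71 + x41 * x50 * x73 + x43 * x50 * x71 + x41 * x53 * x70 + x43 * x51 * x70 = 1) || (!decide (x40 * x51 * x72 + x40 * x52 * x71 + x41 * x50 * x72 + x42 * x50 * x71 + x41 * x52 * x70 + x42 * x51 * x70 = 1) || allZ2 (fun x60 =>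
  (!decide (x40 * x62 + x42 * x60 = 1) || (!decide (x60 * x72 + x62 * x70 = 1) || (!decide (x40 * x52 * x63 + x40 * x53 * x62 + x42 * x50 * x63 + x43 * x50 * x62 + x42 * x53 * x60 + x43 * x52 * x60 = 1) || (!decide (x50 * x61 * x73 + x50 * x63 * x71 + x51 * x60 * x73 + x53 * x60 * x71 + x51 * x63 * x70 + x53 * x61 * x70 = 1) || (!decide (x40 * x51 * x62 + x40 * x52 * x61 + x41 * x50 * x62 + x42 * x50 * x61 + x41 * x52 * x60 + x42 * x51 * x60 = 1) || (!decide (x50 * x61 * x72 + x50 * x62 * x71 + x51 * x60 * x72 + x52 * x60 * x71 + x51 * x62 * x70 + x52 * x61 * x70 = 1) || decide (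
(x40 = 1 ∧ x41 = 1 ∧ x42 = 1 ∧ x43 = 0 ∧ x50 = 0 ∧ x51 = 0 ∧ x52 = 1 ∧ x53 = 1 ∧ x60 = 0 ∧ x61 = 1 ∧ x62 = 1 ∧ x63 = 0 ∧ x70 = 1 ∧ x71 = 0 ∧ x72 = 0 ∧ x73 = 1) ∨
    (x40 = 1 ∧ x41 = 1 ∧ x42 = 1 ∧ x43 = 0 ∧ x50 = 0 ∧ x51 = 0 ∧ x52 = 1 ∧ x53 = 1 ∧ x60 = 0 ∧ x61 = 1 ∧ x62 = 1 ∧ x63 = 0 ∧ x70 = 1 ∧ x71 = 0 ∧ x72 = 1 ∧ x73 = 1) ∨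
    (x40 = 0 ∧ x41 = 1 ∧ x42 = 1 ∧ x43 = 0 ∧ x50 = 0 ∧ x51 = 0 ∧ x52 = 1 ∧ x53 = 1 ∧ x60 = 1 ∧ x61 = 1 ∧ x62 = 1 ∧ x63 = 0 ∧ x70 = 1 ∧ x71 = 0 ∧ x72 = 0 ∧ x73 = 1) ∨
    (x40 = 0 ∧ x41 = 1 ∧ x42 = 1 ∧ x43 = 0 ∧ x50 = 0 ∧ x51 = 0 ∧ x52 = 1 ∧ x53 = 1 ∧ x60 = 1 ∧ x61 = 1 ∧ x62 = 0 ∧ x63 = 1 ∧ x70 = 1 ∧ x71 = 0 ∧ x72 = 1 ∧ x73 = 1) ∨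
    (x40 = 0 ∧ x41 = 1 ∧ x42 = 1 ∧ x43 = 0 ∧ x50 = 0 ∧ x51 = 1 ∧ x52 = 0 ∧ x53 = 1 ∧ x60 = 1 ∧ x61 = 0 ∧ x62 = 1 ∧ x63 = 1 ∧ x70 = 1 ∧ x71 = 1 ∧ x72 = 0 ∧ x73 = 1) ∨
    (x40 = 0 ∧ x41 = 1 ∧ x42 = 1 ∧ x43 = 0 ∧ x50 = 0 ∧ x51 = 1 ∧ x52 = 0 ∧ x53 = 1 ∧ x60 = 1 ∧ x61 = 1 ∧ x62 = 1 ∧ x63 = 0 ∧ x70 = 1 ∧ x71 = 1 ∧ x72 = 0 ∧ x73 = 1) ∨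
    (x40 = 0 ∧ x41 = 1 ∧ x42 = 1 ∧ x43 = 1 ∧ x50 = 1 ∧ x51 = 1 ∧ x52 = 1 ∧ x53 = 0 ∧ x60 = 1 ∧ x61 = 0 ∧ x62 = 1 ∧ x63 = 1 ∧ x70 = 1 ∧ x71 = 1 ∧ x72 = 0 ∧ x73 = 1)))))))))))))))))))))))))))))))))))))
theorem good_true : good = true := by rfl
theorem enum : ∀ x40 x41 x42 x43 x50 x51 x52 x53 x60 x61 x62 x63 x70 x71 x72 x73 : ZMod 2,
    x73 = 1 →
    x42 = 1 →
    x41 = 1 →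
    x70 = 1 →
    x42 * x53 + x43 * x52 = 1 →
    x52 * x63 + x53 * x62 = 1 →
    x62 * x73 + x63 * x72 = 1 →
    x41 * x53 + x43 * x51 = 1 →
    x51 * x63 + x53 * x61 = 1 →
    x61 * x73 + x63 * x71 = 1 →
    x40 * x62 + x42 * x60 = 1 →
    x60 * x72 + x62 * x70 = 1 →
    x40 * x71 + x41 * x70 = 1 →
    x40 * x52 * x63 + x40 * x53 * x62 + x42 * x50 * x63 + x43 * x50 * x62 + x42 * x53 * x60 + x43 * x52 * x60 = 1 →
    x40 * x51 * x73 + x40 * x53 * x71 + x41 * x50 * x73 + x43 * x50 * x71 + x41 * x53 * x70 + x43 * x51 * x70 = 1 →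
    x50 * x61 * x73 + x50 * x63 * x71 + x51 * x60 * x73 + x53 * x60 * x71 + x51 * x63 * x70 + x53 * x61 * x70 = 1 →
    x40 * x51 * x62 + x40 * x52 * x61 + x41 * x50 * x62 + x42 * x50 * x61 + x41 * x52 * x60 + x42 * x51 * x60 = 1 →
    x40 * x51 * x72 + x40 * x52 * x71 + x41 * x50 * x72 + x42 * x50 * x71 + x41 * x52 * x70 + x42 * x51 * x70 = 1 →
    x50 * x61 * x72 + x50 * x62 * x71 + x51 * x60 * x72 + x52 * x60 * x71 + x51 * x62 * x70 + x52 * x61 * x70 = 1 →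
    (x40 = 1 ∧ x41 = 1 ∧ x42 = 1 ∧ x43 = 0 ∧ x50 = 0 ∧ x51 = 0 ∧ x52 = 1 ∧ x53 = 1 ∧ x60 = 0 ∧ x61 = 1 ∧ x62 = 1 ∧ x63 = 0 ∧ x70 = 1 ∧ x71 = 0 ∧ x72 = 0 ∧ x73 = 1) ∨
    (x40 = 1 ∧ x41 = 1 ∧ x42 = 1 ∧ x43 = 0 ∧ x50 = 0 ∧ x51 = 0 ∧ x52 = 1 ∧ x53 = 1 ∧ x60 = 0 ∧ x61 = 1 ∧ x62 = 1 ∧ x63 = 0 ∧ x70 = 1 ∧ x71 = 0 ∧ x72 = 1 ∧ x73 = 1) ∨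
    (x40 = 0 ∧ x41 = 1 ∧ x42 = 1 ∧ x43 = 0 ∧ x50 = 0 ∧ x51 = 0 ∧ x52 = 1 ∧ x53 = 1 ∧ x60 = 1 ∧ x61 = 1 ∧ x62 = 1 ∧ x63 = 0 ∧ x70 = 1 ∧ x71 = 0 ∧ x72 = 0 ∧ x73 = 1) ∨
    (x40 = 0 ∧ x41 = 1 ∧ x42 = 1 ∧ x43 = 0 ∧ x50 = 0 ∧ x51 = 0 ∧ x52 = 1 ∧ x53 = 1 ∧ x60 = 1 ∧ x61 = 1 ∧ x62 = 0 ∧ x63 = 1 ∧ x70 = 1 ∧ x71 = 0 ∧ x72 = 1 ∧ x73 = 1) ∨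
    (x40 = 0 ∧ x41 = 1 ∧ x42 = 1 ∧ x43 = 0 ∧ x50 = 0 ∧ x51 = 1 ∧ x52 = 0 ∧ x53 = 1 ∧ x60 = 1 ∧ x61 = 0 ∧ x62 = 1 ∧ x63 = 1 ∧ x70 = 1 ∧ x71 = 1 ∧ x72 = 0 ∧ x73 = 1) ∨
    (x40 = 0 ∧ x41 = 1 ∧ x42 = 1 ∧ x43 = 0 ∧ x50 = 0 ∧ x51 = 1 ∧ x52 = 0 ∧ x53 = 1 ∧ x60 = 1 ∧ x61 = 1 ∧ x62 = 1 ∧ x63 = 0 ∧ x70 = 1 ∧ x71 = 1 ∧ x72 = 0 ∧ x73 = 1) ∨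
    (x40 = 0 ∧ x41 = 1 ∧ x42 = 1 ∧ x43 = 1 ∧ x50 = 1 ∧ x51 = 1 ∧ x52 = 1 ∧ x53 = 0 ∧ x60 = 1 ∧ x61 = 0 ∧ x62 = 1 ∧ x63 = 1 ∧ x70 = 1 ∧ x71 = 1 ∧ x72 = 0 ∧ x73 = 1) := by
  intro x40 x41 x42 x43 x50 x51 x52 x53 x60 x61 x62 x63 x70 x71 x72 x73 h1 h2 h3 h4 h5 h6 h7 h8 h9 h10 h11 h12 h13 h14 h15 h16 h17 h18 h19
  have h := good_true
  unfold good at h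
  have h := allZ2_spec h x41
  have h := unguard h3 h
  have h := allZ2_spec h x42
  have h := unguard h2 h
  have h := allZ2_spec h x70
  have h := unguard h4 h
  have h := allZ2_spec h x73
  have h := unguard h1 h
  have h := allZ2_spec h x43
  have h := allZ2_spec h x51
  have h := allZ2_spec h x52
  have h := allZ2_spec h x53
  have h := unguard h5 h
  have h := unguard h8 h
  have h := allZ2_spec h x61
  have h := allZ2_spec h x62
  have h := allZ2_spec h x63
  have h := unguard h6 h
  have h := unguard h9 h
  have h := allZ2_spec h x71
  have h := unguard h10 h
  have h := allZ2_spec h x72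
  have h := unguard h7 h
  have h := allZ2_spec h x40
  have h := unguard h13 h
  have h := allZ2_spec h x50
  have h := unguard h15 h
  have h := unguard h18 h
  have h := allZ2_spec h x60
  have h := unguard h11 h
  have h := unguard h12 h
  have h := unguard h14 h
  have h := unguard h16 h
  have h := unguard h17 h
  have h := unguard h19 h
  exact of_decide_eq_true h

def s1l : Fin 8 → Fin 8 := ![2,7,0,6,5,4,3,1]
def s2l : Fin 8 → Fin 8 := ![5,6,4,1,0,2,7,3]
def s3l : Fin 8 → Fin 8 := ![4,3,5,7,2,0,1,6]
def s1 : Equiv.Perm (Fin 8) :=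
  ⟨s1l, s1l, by intro x; revert x; decide, by intro x; revert x; decide⟩
def s2 : Equiv.Perm (Fin 8) :=
  ⟨s2l, s3l, by intro x; revert x; decide, by intro x; revert x; decide⟩
def s3 : Equiv.Perm (Fin 8) :=
  ⟨s3l, s2l, by intro x; revert x; decide, by intro x; revert x; decide⟩

theorem aut_id : IsAut 1 := by unfold IsAut; decide
theorem aut_s1 : IsAut s1 := by unfold IsAut; decide
theorem aut_s2 : IsAut s2 := by unfold IsAut; decide
theorem aut_s3 : IsAut s3 := by unfold IsAut; decide
theorem permMat_one : permMat 1 = 1 := by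
  ext i j
  simp [permMat, Matrix.one_apply]
  exact if_congr Iff.rfl rfl rfl
def g3 : Matrix (Fin 4) (Fin 4) (ZMod 2) := !![0, 1, 1, 0; 0, 0, 0, 1; 1, 1, 0, 1; 0, 1, 0, 0]
theorem hug3 : IsUnit g3 := by
  have h : g3.det = 1 := by rw [det4_eq]; decide
  exact (Matrix.isUnit_iff_isUnit_det g3).mpr (h ▸ isUnit_one)
def g4 : Matrix (Fin 4) (Fin 4) (ZMod 2) := !![1, 0, 0, 1; 1, 0, 0, 0; 1, 0, 1, 1; 0, 1, 1, 1]
theorem hug4 : IsUnit g4 := by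
  have h : g4.det = 1 := by rw [det4_eq]; decide
  exact (Matrix.isUnit_iff_isUnit_det g4).mpr (h ▸ isUnit_one)
def g5 : Matrix (Fin 4) (Fin 4) (ZMod 2) := !![0, 0, 1, 0; 0, 1, 1, 1; 1, 1, 1, 0; 1, 0, 0, 0]
theorem hug5 : IsUnit g5 := by
  have h : g5.det = 1 := by rw [det4_eq]; decide
  exact (Matrix.isUnit_iff_isUnit_det g5).mpr (h ▸ isUnit_one)
def g6 : Matrix (Fin 4) (Fin 4) (ZMod 2) := !![0, 0, 1, 0; 0, 1, 1, 1; 1, 1, 1, 0; 1, 0, 0, 0]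
theorem hug6 : IsUnit g6 := by
  have h : g6.det = 1 := by rw [det4_eq]; decide
  exact (Matrix.isUnit_iff_isUnit_det g6).mpr (h ▸ isUnit_one)

theorem weq3 : g3 * a3 * permMat s1 = a2 := by decide
theorem weq4 : g4 * a4 * permMat s2 = a2 := by decide
theorem weq5 : g5 * a5 * permMat s3 = a1 := by decide
theorem weq6 : g6 * a6 * permMat s3 = a2 := by decide

theorem zmod2_unit {x : ZMod 2} (h : IsUnit x) : x = 1 := by
  fin_cases x
  · exact absurd h not_isUnit_zero
  · rfl

/-- Every (ℤ/2)-characteristic matrix over P₀⁴(8) is equivalent to a₁, a₂ or a₇. -/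
theorem stmt6 (Λ : Matrix (Fin 4) (Fin 8) (ZMod 2))
    (hchar : ∀ v ∈ V0, IsUnit (Λ.submatrix id v).det) :
    MatEquiv Λ a1 ∨ MatEquiv Λ a2 ∨ MatEquiv Λ a7 := by
  have hB : IsUnit (Λ.submatrix id ![0,1,2,3]).det := hchar ![0,1,2,3] (by simp [V0])
  obtain ⟨C, hC⟩ : ∃ C, C = (Λ.submatrix id ![0,1,2,3])⁻¹ := ⟨_, rfl⟩
  have hCB : C * Λ.submatrix id ![0,1,2,3] = 1 := by
    rw [hC]; exact Matrix.nonsing_inv_mul _ hB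
  have hBC : Λ.submatrix id ![0,1,2,3] * C = 1 := by
    rw [hC]; exact Matrix.mul_nonsing_inv _ hB
  have hCu : IsUnit C := ⟨⟨C, Λ.submatrix id ![0,1,2,3], hCB, hBC⟩, rfl⟩
  have hid : (C * Λ).submatrix id ![0,1,2,3] = 1 := by
    rw [mul_submatrix]; exact hCB
  have hmk := mk_of_id (C * Λ) hid
  have hdet : ∀ v ∈ V0, det4 ((mk (fun i => (C * Λ) i 4) (fun i => (C * Λ) i 5) (fun i => (C * Λ) i 6) (fun i => (C * Λ) i 7)).submatrix id v) = 1 := by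
    intro v hv
    rw [← hmk, ← det4_eq]
    refine zmod2_unit ?_
    rw [mul_submatrix, Matrix.det_mul]
    exact ((Matrix.isUnit_iff_isUnit_det _).mp hCu).mul (hchar v hv)
  have h1 := hdet ![0,1,2,7] (by simp [V0])
  rw [bridge1] at h1
  have h2 := hdet ![0,1,3,4] (by simp [V0])
  rw [bridge2] at h2
  have h3 := hdet ![0,2,3,4] (by simp [V0])
  rw [bridge3] at h3
  have h4 := hdet ![1,2,3,7] (by simp [V0])
  rw [bridge4] at h4
  have h5 := hdet ![0,1,4,5] (by simp [V0])
  rw [bridge5] at h5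
  have h6 := hdet ![0,1,5,6] (by simp [V0])
  rw [bridge6] at h6
  have h7 := hdet ![0,1,6,7] (by simp [V0])
  rw [bridge7] at h7
  have h8 := hdet ![0,2,4,5] (by simp [V0])
  rw [bridge8] at h8
  have h9 := hdet ![0,2,5,6] (by simp [V0])
  rw [bridge9] at h9
  have h10 := hdet ![0,2,6,7] (by simp [V0])
  rw [bridge10] at h10
  have h11 := hdet ![1,3,4,6] (by simp [V0])
  rw [bridge11] at h11
  have h12 := hdet ![1,3,6,7] (by simp [V0])
  rw [bridge12] at h12
  have h13 := hdet ![2,3,4,7] (by simp [V0])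
  rw [bridge13] at h13
  have h14 := hdet ![1,4,5,6] (by simp [V0])
  rw [bridge14] at h14
  have h15 := hdet ![2,4,5,7] (by simp [V0])
  rw [bridge15] at h15
  have h16 := hdet ![2,5,6,7] (by simp [V0])
  rw [bridge16] at h16
  have h17 := hdet ![3,4,5,6] (by simp [V0])
  rw [bridge17] at h17
  have h18 := hdet ![3,4,5,7] (by simp [V0])
  rw [bridge18] at h18
  have h19 := hdet ![3,5,6,7] (by simp [V0])
  rw [bridge19] at h19
  rcases enum ((C * Λ) 0 4) ((C * Λ) 1 4) ((C * Λ) 2 4) ((C * Λ) 3 4) ((C * Λ) 0 5) ((C * Λ) 1 5) ((C * Λ) 2 5) ((C * Λ) 3 5) ((C * Λ) 0 6) ((C * Λ) 1 6) ((C * Λ) 2 6) ((C * Λ) 3 6) ((C * Λ) 0 7) ((C * Λ) 1 7) ((C * Λ) 2 7) ((C * Λ) 3 7) h1 h2 h3 h4 h5 h6 h7 h8 h9 h10 h11 h12 h13 h14 h15 h16 h17 h18 h19 with H|H|H|H|H|H|H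
  · obtain ⟨q1,q2,q3,q4,q5,q6,q7,q8,q9,q10,q11,q12,q13,q14,q15,q16⟩ := H
    have hc4 : (fun i => (C * Λ) i 4) = (![1,1,1,0] : Fin 4 → ZMod 2) := by
      funext i; fin_cases i <;> assumption
    have hc5 : (fun i => (C * Λ) i 5) = (![0,0,1,1] : Fin 4 → ZMod 2) := by
      funext i; fin_cases i <;> assumption
    have hc6 : (fun i => (C * Λ) i 6) = (![0,1,1,0] : Fin 4 → ZMod 2) := by
      funext i; fin_cases i <;> assumption
    have hc7 : (fun i => (C * Λ) i 7) = (![1,0,0,1] : Fin 4 → ZMod 2) := by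
      funext i; fin_cases i <;> assumption
    have hL : C * Λ = a1 := by
      rw [hmk, hc4, hc5, hc6, hc7]; decide
    left
    exact ⟨C, 1, hCu, aut_id, by rw [permMat_one, Matrix.mul_one]; exact hL.symm⟩
  · obtain ⟨q1,q2,q3,q4,q5,q6,q7,q8,q9,q10,q11,q12,q13,q14,q15,q16⟩ := H
    have hc4 : (fun i => (C * Λ) i 4) = (![1,1,1,0] : Fin 4 → ZMod 2) := by
      funext i; fin_cases i <;> assumption
    have hc5 : (fun i => (C * Λ) i 5) = (![0,0,1,1] : Fin 4 → ZMod 2) := by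
      funext i; fin_cases i <;> assumption
    have hc6 : (fun i => (C * Λ) i 6) = (![0,1,1,0] : Fin 4 → ZMod 2) := by
      funext i; fin_cases i <;> assumption
    have hc7 : (fun i => (C * Λ) i 7) = (![1,0,1,1] : Fin 4 → ZMod 2) := by
      funext i; fin_cases i <;> assumption
    have hL : C * Λ = a2 := by
      rw [hmk, hc4, hc5, hc6, hc7]; decide
    right; left
    exact ⟨C, 1, hCu, aut_id, by rw [permMat_one, Matrix.mul_one]; exact hL.symm⟩
  · obtain ⟨q1,q2,q3,q4,q5,q6,q7,q8,q9,q10,q11,q12,q13,q14,q15,q16⟩ := H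
    have hc4 : (fun i => (C * Λ) i 4) = (![0,1,1,0] : Fin 4 → ZMod 2) := by
      funext i; fin_cases i <;> assumption
    have hc5 : (fun i => (C * Λ) i 5) = (![0,0,1,1] : Fin 4 → ZMod 2) := by
      funext i; fin_cases i <;> assumption
    have hc6 : (fun i => (C * Λ) i 6) = (![1,1,1,0] : Fin 4 → ZMod 2) := by
      funext i; fin_cases i <;> assumption
    have hc7 : (fun i => (C * Λ) i 7) = (![1,0,0,1] : Fin 4 → ZMod 2) := by
      funext i; fin_cases i <;> assumption
    have hL : C * Λ = a3 := by
      rw [hmk, hc4, hc5, hc6, hc7]; decide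
    right; left
    refine ⟨g3 * C, s1, hug3.mul hCu, aut_s1, ?_⟩
    rw [Matrix.mul_assoc, Matrix.mul_assoc, ← Matrix.mul_assoc C Λ, hL, ← Matrix.mul_assoc, weq3]
  · obtain ⟨q1,q2,q3,q4,q5,q6,q7,q8,q9,q10,q11,q12,q13,q14,q15,q16⟩ := H
    have hc4 : (fun i => (C * Λ) i 4) = (![0,1,1,0] : Fin 4 → ZMod 2) := by
      funext i; fin_cases i <;> assumption
    have hc5 : (fun i => (C * Λ) i 5) = (![0,0,1,1] : Fin 4 → ZMod 2) := by
      funext i; fin_cases i <;> assumption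
    have hc6 : (fun i => (C * Λ) i 6) = (![1,1,0,1] : Fin 4 → ZMod 2) := by
      funext i; fin_cases i <;> assumption
    have hc7 : (fun i => (C * Λ) i 7) = (![1,0,1,1] : Fin 4 → ZMod 2) := by
      funext i; fin_cases i <;> assumption
    have hL : C * Λ = a4 := by
      rw [hmk, hc4, hc5, hc6, hc7]; decide
    right; left
    refine ⟨g4 * C, s2, hug4.mul hCu, aut_s2, ?_⟩
    rw [Matrix.mul_assoc, Matrix.mul_assoc, ← Matrix.mul_assoc C Λ, hL, ← Matrix.mul_assoc, weq4]
  · obtain ⟨q1,q2,q3,q4,q5,q6,q7,q8,q9,q10,q11,q12,q13,q14,q15,q16⟩ := H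
    have hc4 : (fun i => (C * Λ) i 4) = (![0,1,1,0] : Fin 4 → ZMod 2) := by
      funext i; fin_cases i <;> assumption
    have hc5 : (fun i => (C * Λ) i 5) = (![0,1,0,1] : Fin 4 → ZMod 2) := by
      funext i; fin_cases i <;> assumption
    have hc6 : (fun i => (C * Λ) i 6) = (![1,0,1,1] : Fin 4 → ZMod 2) := by
      funext i; fin_cases i <;> assumption
    have hc7 : (fun i => (C * Λ) i 7) = (![1,1,0,1] : Fin 4 → ZMod 2) := by
      funext i; fin_cases i <;> assumption
    have hL : C * Λ = a5 := by
      rw [hmk, hc4, hc5, hc6, hc7]; decide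
    left
    refine ⟨g5 * C, s3, hug5.mul hCu, aut_s3, ?_⟩
    rw [Matrix.mul_assoc, Matrix.mul_assoc, ← Matrix.mul_assoc C Λ, hL, ← Matrix.mul_assoc, weq5]
  · obtain ⟨q1,q2,q3,q4,q5,q6,q7,q8,q9,q10,q11,q12,q13,q14,q15,q16⟩ := H
    have hc4 : (fun i => (C * Λ) i 4) = (![0,1,1,0] : Fin 4 → ZMod 2) := by
      funext i; fin_cases i <;> assumption
    have hc5 : (fun i => (C * Λ) i 5) = (![0,1,0,1] : Fin 4 → ZMod 2) := by
      funext i; fin_cases i <;> assumption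
    have hc6 : (fun i => (C * Λ) i 6) = (![1,1,1,0] : Fin 4 → ZMod 2) := by
      funext i; fin_cases i <;> assumption
    have hc7 : (fun i => (C * Λ) i 7) = (![1,1,0,1] : Fin 4 → ZMod 2) := by
      funext i; fin_cases i <;> assumption
    have hL : C * Λ = a6 := by
      rw [hmk, hc4, hc5, hc6, hc7]; decide
    right; left
    refine ⟨g6 * C, s3, hug6.mul hCu, aut_s3, ?_⟩
    rw [Matrix.mul_assoc, Matrix.mul_assoc, ← Matrix.mul_assoc C Λ, hL, ← Matrix.mul_assoc, weq6]
  · obtain ⟨q1,q2,q3,q4,q5,q6,q7,q8,q9,q10,q11,q12,q13,q14,q15,q16⟩ := H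
    have hc4 : (fun i => (C * Λ) i 4) = (![0,1,1,1] : Fin 4 → ZMod 2) := by
      funext i; fin_cases i <;> assumption
    have hc5 : (fun i => (C * Λ) i 5) = (![1,1,1,0] : Fin 4 → ZMod 2) := by
      funext i; fin_cases i <;> assumption
    have hc6 : (fun i => (C * Λ) i 6) = (![1,0,1,1] : Fin 4 → ZMod 2) := by
      funext i; fin_cases i <;> assumption
    have hc7 : (fun i => (C * Λ) i 7) = (![1,1,0,1] : Fin 4 → ZMod 2) := by
      funext i; fin_cases i <;> assumption
    have hL : C * Λ = a7 := by
      rw [hmk, hc4, hc5, hc6, hc7]; decide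
    right; right
    exact ⟨C, 1, hCu, aut_id, by rw [permMat_one, Matrix.mul_one]; exact hL.symm⟩
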